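/- arXiv:2302.00031 — 3 statements merged into one kernel-verified Lean document; each statement's English description precedes it below -/
import Mathlib

section
/- Let G = (V, E) be a finite simple graph with bunkbed graph G±, let u ≠ v ∈ V, let S⁻ be the set of (u₋–v₋)-cuts of G± containing u₋, let S⁺ be the set of (u₋–v₊)-cuts of G± containing u₋, and let T⁻ ⊆ S⁻ (resp. T⁺ ⊆ S⁺) be those cuts A for which u and v lie in the same connected component of G[supp(A)]. Then there is a bijection φ : S⁺ \ T⁺ → S⁻ \ T⁻ such that for every A ∈ S⁺ \ T⁺, the multiset of boundary edges ∂φ(A) in G± has the same image as ∂A under the symmetry swapping the two copies of each horizontal edge; in particular, for any symmetric edge-probability function p on G±, the probability that all edges of ∂φ(A) are closed equals the probability that all edges of ∂A are closed. -/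
open SimpleGraph Finset
open scoped Classical

variable {V : Type*}

/-- The bunkbed graph `G □ K₂`: vertex `(x, false)` is `x₋`, vertex `(x, true)` is `x₊`. -/
def bunkbed (G : SimpleGraph V) : SimpleGraph (V × Bool) where
  Adj a b := (a.2 = b.2 ∧ G.Adj a.1 b.1) ∨ (a.1 = b.1 ∧ a.2 ≠ b.2)
  symm := by
    constructor
    rintro ⟨x, s⟩ ⟨y, t⟩ (⟨h1, h2⟩ | ⟨h1, h2⟩)
    · exact Or.inl ⟨h1.symm, h2.symm⟩
    · exact Or.inr ⟨h1.symm, Ne.symm h2⟩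
  loopless := by
    constructor
    rintro ⟨x, s⟩ (⟨_, h⟩ | ⟨_, h⟩)
    · exact G.loopless.irrefl x h
    · exact h rfl

/-- `supp A = {x : h_x(A) = 1}`, i.e. exactly one of `x₋, x₊` lies in `A`. -/
def supp (A : Set (V × Bool)) : Set V := {x | Xor' ((x, false) ∈ A) ((x, true) ∈ A)}

/-- Edge boundary of a vertex set in a graph. -/
def bdry {W : Type*} (H : SimpleGraph W) (A : Set W) : Set (Sym2 W) :=
  {e | e ∈ H.edgeSet ∧ ∃ x y, e = s(x, y) ∧ x ∈ A ∧ y ∉ A}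

/-- The induced restriction of `G` to a vertex set `S`, as a graph on `V`. -/
def within (G : SimpleGraph V) (S : Set V) : SimpleGraph V where
  Adj a b := G.Adj a b ∧ a ∈ S ∧ b ∈ S
  symm := ⟨fun _ _ ⟨h, ha, hb⟩ => ⟨h.symm, hb, ha⟩⟩
  loopless := ⟨fun a ⟨h, _⟩ => G.loopless.irrefl a h⟩

/-- Probability of an event `Q` (a predicate on the set of open edges) under independent
bond percolation on `H` where edge `e` is open with probability `p e`. -/
noncomputable def prEvent {W : Type*} [Fintype W] (H : SimpleGraph W)
    (p : Sym2 W → ℝ) (Q : Finset (Sym2 W) → Prop) : ℝ :=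
  ∑ ω ∈ H.edgeFinset.powerset,
    if Q ω then ∏ e ∈ H.edgeFinset, (if e ∈ ω then p e else 1 - p e) else 0

/-- The two-point function: probability that `a` and `b` are joined by a path of open edges. -/
noncomputable def prConn {W : Type*} [Fintype W] (H : SimpleGraph W)
    (p : Sym2 W → ℝ) (a b : W) : ℝ :=
  prEvent H p fun ω => (SimpleGraph.fromEdgeSet (↑ω : Set (Sym2 W))).Reachable a b

namespace BBP

variable {V : Type*}

/-- The component of `v` in `G[supp A]`. -/
def comp (G : SimpleGraph V) (v : V) (A : Set (V × Bool)) : Set V :=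
  {x | x ∈ supp A ∧ (within G (supp A)).Reachable v x}

/-- Flip the level of a bunkbed vertex. -/
def fl : V × Bool → V × Bool := fun q => (q.1, !q.2)

noncomputable def flipOn (C : Set V) : V × Bool → V × Bool :=
  fun q => if q.1 ∈ C then fl q else q

noncomputable def phi (G : SimpleGraph V) (v : V) (A : Set (V × Bool)) : Set (V × Bool) :=
  flipOn (comp G v A) ⁻¹' A

lemma flipOn_flipOn (C : Set V) (q : V × Bool) : flipOn C (flipOn C q) = q := by
  unfold flipOn fl
  by_cases h : q.1 ∈ C <;> simp [h]

lemma mem_phi {G : SimpleGraph V} {v : V} {A : Set (V × Bool)} {q : V × Bool} :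
    q ∈ phi G v A ↔ flipOn (comp G v A) q ∈ A := Iff.rfl

lemma comp_subset {G : SimpleGraph V} {v : V} {A : Set (V × Bool)} :
    comp G v A ⊆ supp A := fun _ h => h.1

lemma supp_phi (G : SimpleGraph V) (v : V) (A : Set (V × Bool)) :
    supp (phi G v A) = supp A := by
  ext x
  by_cases h : x ∈ comp G v A
  · simp only [supp, Set.mem_setOf_eq, mem_phi, flipOn, fl, if_pos (show (x, false).1 ∈ comp G v A from h), if_pos (show (x, true).1 ∈ comp G v A from h)]
    simp [Xor', Xor]; tauto
  · simp only [supp, Set.mem_setOf_eq, mem_phi, flipOn,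
      if_neg (show ¬ (x, false).1 ∈ comp G v A from h), if_neg (show ¬ (x, true).1 ∈ comp G v A from h)]

lemma comp_phi (G : SimpleGraph V) (v : V) (A : Set (V × Bool)) :
    comp G v (phi G v A) = comp G v A := by
  unfold comp; rw [supp_phi]

lemma phi_phi (G : SimpleGraph V) (v : V) (A : Set (V × Bool)) :
    phi G v (phi G v A) = A := by
  ext q
  rw [mem_phi, comp_phi, mem_phi, flipOn_flipOn]

lemma mem_of_not_supp {A : Set (V × Bool)} {x : V} (h : x ∉ supp A) (b : Bool) :
    ((x, b) ∈ A ↔ (x, !b) ∈ A) := by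
  simp only [supp, Set.mem_setOf_eq, Xor', Xor] at h
  cases b <;> tauto

lemma comp_closed {G : SimpleGraph V} {v : V} {A : Set (V × Bool)} {x y : V}
    (hx : x ∈ comp G v A) (hadj : G.Adj x y) (hy : y ∈ supp A) : y ∈ comp G v A :=
  ⟨hy, hx.2.trans (SimpleGraph.Adj.reachable (show (within G (supp A)).Adj x y from ⟨hadj, hx.1, hy⟩))⟩

lemma u_not_comp {G : SimpleGraph V} {u v : V} {A : Set (V × Bool)}
    (h : ¬ (within G (supp A)).Reachable u v) : u ∉ comp G v A :=
  fun hu => h hu.2.symm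

lemma phi_mem_S {G : SimpleGraph V} {u v : V} {A : Set (V × Bool)} (b : Bool)
    (hr : ¬ (within G (supp A)).Reachable u v)
    (hu : (u, false) ∈ A) (hv : (v, b) ∉ A) :
    (u, false) ∈ phi G v A ∧ (v, !b) ∉ phi G v A := by
  constructor
  · rw [mem_phi, flipOn, if_neg]
    · exact hu
    · exact u_not_comp hr
  · by_cases hvs : v ∈ supp A
    · rw [mem_phi, flipOn, if_pos (show (v, !b).1 ∈ comp G v A from ⟨hvs, SimpleGraph.Reachable.refl v⟩)]
      simpa [fl] using hv
    · rw [mem_phi, flipOn, if_neg (show ¬ (v, !b).1 ∈ comp G v A from fun hc => hvs (comp_subset hc))]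
      intro hc
      exact hv ((mem_of_not_supp hvs b).mpr (by simpa using hc))

/-- The edge symmetry: flip both levels of edges touching `C`. -/
noncomputable def tau (C : Set V) : Sym2 (V × Bool) → Sym2 (V × Bool) :=
  fun e => if ∃ a ∈ e, a.1 ∈ C then Sym2.map fl e else e

lemma touches_map (C : Set V) (e : Sym2 (V × Bool)) :
    (∃ a ∈ Sym2.map fl e, a.1 ∈ C) ↔ (∃ a ∈ e, a.1 ∈ C) := by
  constructor
  · rintro ⟨a, ha, hc⟩
    rw [Sym2.mem_map] at ha
    obtain ⟨b, hb, rfl⟩ := ha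
    exact ⟨b, hb, hc⟩
  · rintro ⟨a, ha, hc⟩
    exact ⟨fl a, Sym2.mem_map.mpr ⟨a, ha, rfl⟩, hc⟩

lemma map_fl_fl (e : Sym2 (V × Bool)) : Sym2.map fl (Sym2.map fl e) = e := by
  rw [Sym2.map_map]
  have : (fl ∘ fl : V × Bool → V × Bool) = id := by
    funext q; simp [fl]
  rw [this, Sym2.map_id]
  rfl

lemma tau_tau (C : Set V) (e : Sym2 (V × Bool)) : tau C (tau C e) = e := by
  unfold tau
  by_cases h : ∃ a ∈ e, a.1 ∈ C
  · rw [if_pos h, if_pos ((touches_map C e).mpr h), map_fl_fl]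
  · rw [if_neg h, if_neg h]

lemma bdry_map {G : SimpleGraph V} {v : V} {A : Set (V × Bool)} {e : Sym2 (V × Bool)}
    (he : e ∈ bdry (bunkbed G) A) :
    tau (comp G v A) e ∈ bdry (bunkbed G) (phi G v A) := by
  obtain ⟨hedge, a, b, heq, ha, hb⟩ := he
  subst heq
  obtain ⟨x, s⟩ := a
  obtain ⟨y, t⟩ := b
  rw [SimpleGraph.mem_edgeSet] at hedge
  set C := comp G v A with hC
  rcases hedge with ⟨hst, hadj⟩ | ⟨hxy, hst⟩
  · -- horizontal
    simp only at hst hadj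
    subst hst
    by_cases htouch : ∃ a ∈ s((x, s), (y, s)), a.1 ∈ C
    · rw [tau, if_pos htouch, Sym2.map_pair_eq]
      have hxy' : x ∈ C ∨ y ∈ C := by
        obtain ⟨a, haa, hc⟩ := htouch
        rw [Sym2.mem_iff] at haa
        rcases haa with rfl | rfl
        · exact Or.inl hc
        · exact Or.inr hc
      have hxp : (fl (x, s) : V × Bool) ∈ phi G v A := by
        by_cases hx : x ∈ C
        · rw [mem_phi, flipOn, if_pos (show (fl (x, s) : V × Bool).1 ∈ C from hx)]
          simpa [fl] using ha
        · have hy : y ∈ C := hxy'.resolve_left hx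
          have hxs : x ∉ supp A := fun hxs => hx (comp_closed hy hadj.symm hxs)
          rw [mem_phi, flipOn, if_neg (show ¬ (fl (x, s) : V × Bool).1 ∈ C from hx)]
          exact (mem_of_not_supp hxs s).mp ha
      have hyp : (fl (y, s) : V × Bool) ∉ phi G v A := by
        by_cases hy : y ∈ C
        · rw [mem_phi, flipOn, if_pos (show (fl (y, s) : V × Bool).1 ∈ C from hy)]
          simpa [fl] using hb
        · have hx : x ∈ C := hxy'.resolve_right hy
          have hys : y ∉ supp A := fun hys => hy (comp_closed hx hadj hys)
          rw [mem_phi, flipOn, if_neg (show ¬ (fl (y, s) : V × Bool).1 ∈ C from hy)]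
          exact fun hc => hb ((mem_of_not_supp hys s).mpr (by simpa [fl] using hc))
      refine ⟨(SimpleGraph.mem_edgeSet _).mpr (Or.inl ⟨rfl, hadj⟩), fl (x, s), fl (y, s), rfl, hxp, hyp⟩
    · rw [tau, if_neg htouch]
      have hx : x ∉ C := fun hc => htouch ⟨(x, s), Sym2.mem_iff.mpr (Or.inl rfl), hc⟩
      have hy : y ∉ C := fun hc => htouch ⟨(y, s), Sym2.mem_iff.mpr (Or.inr rfl), hc⟩
      refine ⟨(SimpleGraph.mem_edgeSet _).mpr (Or.inl ⟨rfl, hadj⟩), (x, s), (y, s), rfl, ?_, ?_⟩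
      · rw [mem_phi, flipOn, if_neg (show ¬ (x, s).1 ∈ C from hx)]; exact ha
      · rw [mem_phi, flipOn, if_neg (show ¬ (y, s).1 ∈ C from hy)]
        exact hb
  · -- vertical
    simp only at hxy hst
    subst hxy
    by_cases hx : x ∈ C
    · rw [tau, if_pos ⟨(x, s), Sym2.mem_iff.mpr (Or.inl rfl), hx⟩, Sym2.map_pair_eq]
      refine ⟨(SimpleGraph.mem_edgeSet _).mpr (Or.inr ⟨rfl, by simp [fl]; exact fun h => hst (by cases s <;> cases t <;> simp_all)⟩), fl (x, s), fl (x, t), rfl, ?_, ?_⟩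
      · rw [mem_phi, flipOn, if_pos (show (fl (x, s) : V × Bool).1 ∈ C from hx)]
        simpa [fl] using ha
      · rw [mem_phi, flipOn, if_pos (show (fl (x, t) : V × Bool).1 ∈ C from hx)]
        intro hc; exact hb (by simpa [fl] using hc)
    · have hnt : ¬ ∃ a ∈ s((x, s), (x, t)), a.1 ∈ C := by
        rintro ⟨a, haa, hc⟩
        rw [Sym2.mem_iff] at haa
        rcases haa with rfl | rfl <;> exact hx hc
      rw [tau, if_neg hnt]
      refine ⟨(SimpleGraph.mem_edgeSet _).mpr (Or.inr ⟨rfl, hst⟩), (x, s), (x, t), rfl, ?_, ?_⟩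
      · rw [mem_phi, flipOn, if_neg (show ¬ (x, s).1 ∈ C from hx)]; exact ha
      · rw [mem_phi, flipOn, if_neg (show ¬ (x, t).1 ∈ C from hx)]; exact hb

lemma p_tau {G : SimpleGraph V} (C : Set V) {e : Sym2 (V × Bool)}
    (he : e ∈ (bunkbed G).edgeSet) (p : Sym2 (V × Bool) → ℝ)
    (hsym : ∀ x y : V, p s((x, false), (y, false)) = p s((x, true), (y, true))) :
    p (tau C e) = p e := by
  unfold tau
  by_cases h : ∃ a ∈ e, a.1 ∈ C
  · rw [if_pos h]
    induction e using Sym2.inductionOn with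
    | hf a b =>
      obtain ⟨x, s⟩ := a
      obtain ⟨y, t⟩ := b
      rw [SimpleGraph.mem_edgeSet] at he
      rw [Sym2.map_pair_eq]
      rcases he with ⟨hst, _⟩ | ⟨hxy, hst⟩
      · simp only at hst
        subst hst
        cases s
        · simp [fl]; exact (hsym x y).symm
        · simp [fl]; exact hsym x y
      · simp only at hxy hst
        subst hxy
        have : t = !s := by cases s <;> cases t <;> simp_all
        subst this
        simp only [fl, Bool.not_not]
        exact congrArg p (Sym2.eq_swap)
  · rw [if_neg h]

end BBP


/-- A probability-preserving bijection between `S⁺ \ T⁺` and `S⁻ \ T⁻`. -/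
theorem cancellation_bijection [Fintype V] (G : SimpleGraph V) (u v : V) (huv : u ≠ v) :
    ∃ φ : Set (V × Bool) → Set (V × Bool),
      Set.BijOn φ
        ({A | (u, false) ∈ A ∧ (v, true) ∉ A} \
          {A | (within G (supp A)).Reachable u v})
        ({A | (u, false) ∈ A ∧ (v, false) ∉ A} \
          {A | (within G (supp A)).Reachable u v}) ∧
      ∀ A ∈ ({A | (u, false) ∈ A ∧ (v, true) ∉ A} \
          {A | (within G (supp A)).Reachable u v} : Set (Set (V × Bool))),
        ∀ p : Sym2 (V × Bool) → ℝ,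
          (∀ e, 0 ≤ p e ∧ p e ≤ 1) →
          (∀ x y : V, p s((x, false), (y, false)) = p s((x, true), (y, true))) →
          ∏ e ∈ (bdry (bunkbed G) (φ A)).toFinset, (1 - p e) =
            ∏ e ∈ (bdry (bunkbed G) A).toFinset, (1 - p e) := by
  refine ⟨BBP.phi G v, ?_, ?_⟩
  · refine Set.InvOn.bijOn (f' := BBP.phi G v) ⟨?_, ?_⟩ ?_ ?_
    · intro A _; exact BBP.phi_phi G v A
    · intro A _; exact BBP.phi_phi G v A
    · rintro A ⟨⟨hu, hv⟩, hr⟩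
      simp only [Set.mem_setOf_eq] at hu hv hr ⊢
      obtain ⟨h1, h2⟩ := BBP.phi_mem_S true hr hu hv
      refine ⟨⟨h1, by simpa using h2⟩, ?_⟩
      simp only [Set.mem_setOf_eq, BBP.supp_phi]
      exact hr
    · rintro A ⟨⟨hu, hv⟩, hr⟩
      simp only [Set.mem_setOf_eq] at hu hv hr ⊢
      obtain ⟨h1, h2⟩ := BBP.phi_mem_S false hr hu hv
      refine ⟨⟨h1, by simpa using h2⟩, ?_⟩
      simp only [Set.mem_setOf_eq, BBP.supp_phi]
      exact hr
  · rintro A ⟨⟨hu, hv⟩, hr⟩ p hp hsym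
    refine Finset.prod_nbij' (BBP.tau (BBP.comp G v A)) (BBP.tau (BBP.comp G v A))
      ?_ ?_ ?_ ?_ ?_
    · intro e hee
      rw [Set.mem_toFinset] at hee ⊢
      have := BBP.bdry_map (v := v) hee
      rwa [BBP.comp_phi, BBP.phi_phi] at this
    · intro e hee
      rw [Set.mem_toFinset] at hee ⊢
      exact BBP.bdry_map hee
    · intro e _; exact BBP.tau_tau _ e
    · intro e _; exact BBP.tau_tau _ e
    · intro e hee
      rw [Set.mem_toFinset] at hee
      rw [BBP.p_tau (BBP.comp G v A) hee.1 p hsym]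
end

section
/- Let G = (V, E) be a finite simple graph with bunkbed graph G±, and let A ⊆ V(G±) be any subset. Define B := {x₋ : x ∈ supp(A)}. Then every edge of ∂B (the edge-boundary of B in G±) is 'covered' by ∂A in the following sense: every vertical edge x₋x₊ ∈ ∂B also lies in ∂A, and for every horizontal edge x₋y₋ ∈ ∂B, at least one of x₋y₋ and x₊y₊ lies in ∂A. Moreover, ∂B contains no edge of the form x₊y₊. -/
open SimpleGraph Finset
open scoped Classical

variable {V : Type*}

/-- Every boundary edge of `B = {x₋ : x ∈ supp A}` is covered by `∂A`,
and `∂B` contains no edge of the form `x₊y₊`. -/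
theorem bdry_proj_covered [Fintype V] (G : SimpleGraph V) (A : Set (V × Bool)) :
    (∀ x : V, s((x, false), (x, true)) ∈ bdry (bunkbed G) {p : V × Bool | p.2 = false ∧ p.1 ∈ supp A} →
      s((x, false), (x, true)) ∈ bdry (bunkbed G) A) ∧
    (∀ x y : V, s((x, false), (y, false)) ∈ bdry (bunkbed G) {p : V × Bool | p.2 = false ∧ p.1 ∈ supp A} →
      s((x, false), (y, false)) ∈ bdry (bunkbed G) A ∨
        s((x, true), (y, true)) ∈ bdry (bunkbed G) A) ∧
    (∀ x y : V, s((x, true), (y, true)) ∉ bdry (bunkbed G) {p : V × Bool | p.2 = false ∧ p.1 ∈ supp A}) := by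
  refine ⟨?_, ?_, ?_⟩
  · intro x h
    obtain ⟨hE, a, b, hab, haB, hbB⟩ := h
    rcases Sym2.eq_iff.mp hab with ⟨ha, hb⟩ | ⟨ha, hb⟩
    · subst ha; subst hb
      obtain ⟨-, hsupp⟩ := haB
      rcases hsupp with ⟨h1, h2⟩ | ⟨h1, h2⟩
      · exact ⟨hE, (x, false), (x, true), rfl, h1, h2⟩
      · exact ⟨hE, (x, true), (x, false), Sym2.eq_swap.symm, h1, h2⟩
    · rw [← hb] at haB; exact absurd haB.1 (by simp)
  · intro x y h
    obtain ⟨hE, a, b, hab, haB, hbB⟩ := h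
    have hadj : G.Adj x y := by
      rcases (SimpleGraph.mem_edgeSet _).mp hE with ⟨-, h2⟩ | ⟨h1, h2⟩
      · exact h2
      · simp at h2
    have key : ∀ u v : V, G.Adj u v → u ∈ supp A → v ∉ supp A →
        s((u, false), (v, false)) ∈ bdry (bunkbed G) A ∨
          s((u, true), (v, true)) ∈ bdry (bunkbed G) A := by
      intro u v huv hu hv
      have hEf : s((u, false), (v, false)) ∈ (bunkbed G).edgeSet :=
        (SimpleGraph.mem_edgeSet _).mpr (Or.inl ⟨rfl, huv⟩)
      have hEt : s((u, true), (v, true)) ∈ (bunkbed G).edgeSet :=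
        (SimpleGraph.mem_edgeSet _).mpr (Or.inl ⟨rfl, huv⟩)
      by_cases hvf : (v, false) ∈ A
      · by_cases hvt : (v, true) ∈ A
        · -- both in A; exactly one of u₋, u₊ in A
          rcases hu with ⟨h1, h2⟩ | ⟨h1, h2⟩
          · exact Or.inr ⟨hEt, (v, true), (u, true), Sym2.eq_swap.symm, hvt, h2⟩
          · exact Or.inl ⟨hEf, (v, false), (u, false), Sym2.eq_swap.symm, hvf, h2⟩
        · exact absurd (Or.inl ⟨hvf, hvt⟩) hv
      · by_cases hvt : (v, true) ∈ A
        · exact absurd (Or.inr ⟨hvt, hvf⟩) hv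
        · rcases hu with ⟨h1, h2⟩ | ⟨h1, h2⟩
          · exact Or.inl ⟨hEf, (u, false), (v, false), rfl, h1, hvf⟩
          · exact Or.inr ⟨hEt, (u, true), (v, true), rfl, h1, hvt⟩
    rcases Sym2.eq_iff.mp hab with ⟨ha, hb⟩ | ⟨ha, hb⟩
    · subst ha; subst hb
      exact key x y hadj haB.2 (fun hy => hbB ⟨rfl, hy⟩)
    · subst ha; subst hb
      rcases key y x hadj.symm haB.2 (fun hy => hbB ⟨rfl, hy⟩) with h | h
      · exact Or.inl (by rwa [Sym2.eq_swap] at h)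
      · exact Or.inr (by rwa [Sym2.eq_swap] at h)

  · intro x y h
    obtain ⟨hE, a, b, hab, haB, hbB⟩ := h
    rcases Sym2.eq_iff.mp hab with ⟨ha, hb⟩ | ⟨ha, hb⟩
    · subst ha; exact absurd haB.1 (by simp)
    · rw [← hb] at haB; exact absurd haB.1 (by simp)
end

section
/- Let G = (V, E) be a finite simple graph with bunkbed graph G±, let u ≠ v ∈ V, and assign to each edge e of G± a formal variable q(e) in such a way that q(x₋y₋) = q(x₊y₊) for every xy ∈ E (symmetry). For a cut A ⊆ V(G±), let P(A) := ∏_{e ∈ ∂A} q(e) be the corresponding monomial (with multiplicity: an edge appearing once contributes degree 1). Then for every (u₋–v₋)-cut A containing u₋ with u and v in the same component of G[supp(A)], the cut B := {x₋ : x ∈ supp(A)} is a (u₋–v₊)-cut containing u₋ with u, v in the same component of G[supp(B)], and the monomial P(B) strictly divides the monomial P(A). -/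
open SimpleGraph Finset
open scoped Classical

variable {V : Type*}

section Aux

variable {W : Type*}

lemma exists_flip {H : SimpleGraph W} (D : W → Prop) :
    ∀ {a b : W}, H.Walk a b → D a → ¬ D b → ∃ x y, H.Adj x y ∧ D x ∧ ¬ D y := by
  intro a b w
  induction w with
  | nil => intro ha hb; exact absurd ha hb
  | @cons a c b h w ih =>
    intro ha hb
    by_cases hc : D c
    · exact ih hc hb
    · exact ⟨a, c, h, ha, hc⟩

lemma mem_bdry_iff (H : SimpleGraph W) (C : Set W) (a b : W) :
    s(a, b) ∈ bdry H C ↔ H.Adj a b ∧ ((a ∈ C ∧ b ∉ C) ∨ (b ∈ C ∧ a ∉ C)) := by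
  constructor
  · rintro ⟨he, x, y, heq, hx, hy⟩
    rw [Sym2.eq_iff] at heq
    refine ⟨H.mem_edgeSet.1 he, ?_⟩
    rcases heq with ⟨rfl, rfl⟩ | ⟨rfl, rfl⟩
    · exact Or.inl ⟨hx, hy⟩
    · exact Or.inr ⟨hx, hy⟩
  · rintro ⟨h, ⟨hx, hy⟩ | ⟨hx, hy⟩⟩
    · exact ⟨H.mem_edgeSet.2 h, a, b, rfl, hx, hy⟩
    · exact ⟨H.mem_edgeSet.2 h, b, a, Sym2.eq_swap.symm, hx, hy⟩

lemma bdry_subset_edgeSet (H : SimpleGraph W) (C : Set W) : bdry H C ⊆ H.edgeSet :=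
  fun _ he => he.1

end Aux

/-- For `A ∈ T⁻`, the cut `B = {x₋ : x ∈ supp A}` lies in `T⁺` and the
monomial `P(B) = ∏_{e ∈ ∂B} X_{q(e)}` strictly divides `P(A)`. Variables are assigned by
`q`, which identifies the two copies of each horizontal edge and is otherwise injective
on edges. -/
theorem first_order_strict_division {ι : Type*} [Fintype V]
    (G : SimpleGraph V) (u v : V) (huv : u ≠ v)
    (q : Sym2 (V × Bool) → ι)
    (hsym : ∀ x y : V, q s((x, false), (y, false)) = q s((x, true), (y, true)))
    (hinj : ∀ e₁ ∈ (bunkbed G).edgeSet, ∀ e₂ ∈ (bunkbed G).edgeSet, q e₁ = q e₂ →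
      e₁ = e₂ ∨ ∃ x y : V,
        (e₁ = s((x, false), (y, false)) ∧ e₂ = s((x, true), (y, true))) ∨
        (e₁ = s((x, true), (y, true)) ∧ e₂ = s((x, false), (y, false))))
    (A : Set (V × Bool)) (hu : (u, false) ∈ A) (hv : (v, false) ∉ A)
    (hconn : (within G (supp A)).Reachable u v) :
    ((u, false) ∈ {p : V × Bool | p.2 = false ∧ p.1 ∈ supp A} ∧
      (v, true) ∉ {p : V × Bool | p.2 = false ∧ p.1 ∈ supp A}) ∧
    (within G (supp {p : V × Bool | p.2 = false ∧ p.1 ∈ supp A})).Reachable u v ∧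
    (∏ e ∈ (bdry (bunkbed G) {p : V × Bool | p.2 = false ∧ p.1 ∈ supp A}).toFinset,
        (MvPolynomial.X (q e) : MvPolynomial ι ℝ)) ∣
      (∏ e ∈ (bdry (bunkbed G) A).toFinset, (MvPolynomial.X (q e) : MvPolynomial ι ℝ)) ∧
    (∏ e ∈ (bdry (bunkbed G) {p : V × Bool | p.2 = false ∧ p.1 ∈ supp A}).toFinset,
        (MvPolynomial.X (q e) : MvPolynomial ι ℝ)) ≠
      (∏ e ∈ (bdry (bunkbed G) A).toFinset, (MvPolynomial.X (q e) : MvPolynomial ι ℝ)) := by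
  classical
  set S : Set V := supp A with hSdef
  set B : Set (V × Bool) := {p : V × Bool | p.2 = false ∧ p.1 ∈ S} with hBdef
  have hmemB : ∀ p : V × Bool, p ∈ B ↔ (p.2 = false ∧ p.1 ∈ S) := fun p => Iff.rfl
  have hmemS : ∀ z : V, z ∈ S ↔ Xor' ((z, false) ∈ A) ((z, true) ∈ A) := fun z => Iff.rfl
  obtain ⟨w⟩ := hconn
  have huS : u ∈ S := by
    cases w with
    | nil => exact absurd rfl huv
    | cons h _ => exact h.2.1
  have hvS : v ∈ S := by
    have hw : Nonempty ((within G S).Walk v u) := ⟨w.reverse⟩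
    obtain ⟨w'⟩ := hw
    cases w' with
    | nil => exact absurd rfl huv.symm
    | cons h _ => exact h.2.1
  -- basic adjacency facts in the bunkbed graph
  have hadjH : ∀ (a b : V) (s : Bool), G.Adj a b → (bunkbed G).Adj (a, s) (b, s) :=
    fun a b s h => Or.inl ⟨rfl, h⟩
  have hadjV : ∀ a : V, (bunkbed G).Adj (a, false) (a, true) :=
    fun a => Or.inr ⟨rfl, by simp⟩
  -- vertical edges over `S` lie in `∂A`
  have hvertA : ∀ z : V, z ∈ S → s((z, false), (z, true)) ∈ bdry (bunkbed G) A := by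
    intro z hz
    rw [mem_bdry_iff]
    refine ⟨hadjV z, ?_⟩
    have hz' : Xor' ((z, false) ∈ A) ((z, true) ∈ A) := (hmemS z).1 hz
    rcases hz' with ⟨h1, h2⟩ | ⟨h1, h2⟩
    · exact Or.inl ⟨h1, h2⟩
    · exact Or.inr ⟨h1, h2⟩
  -- classification of the edges of `∂B`
  have hBchar : ∀ e ∈ bdry (bunkbed G) B,
      (∃ z, z ∈ S ∧ e = s((z, false), (z, true))) ∨
      (∃ a b, G.Adj a b ∧ a ∈ S ∧ b ∉ S ∧ e = s((a, false), (b, false))) := by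
    intro e he
    induction e using Sym2.ind with
    | _ p r =>
      rw [mem_bdry_iff] at he
      obtain ⟨hadj, hmem⟩ := he
      obtain ⟨x, s⟩ := p
      obtain ⟨y, t⟩ := r
      rcases hadj with ⟨hst, hG⟩ | ⟨hxy, hst⟩
      · dsimp at hst hG
        subst hst
        rcases hmem with ⟨h1, h2⟩ | ⟨h1, h2⟩
        · obtain ⟨hs, hxS⟩ := (hmemB _).1 h1
          dsimp at hs; subst hs
          exact Or.inr ⟨x, y, hG, hxS, fun hyS => h2 ((hmemB _).2 ⟨rfl, hyS⟩), rfl⟩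
        · obtain ⟨hs, hyS⟩ := (hmemB _).1 h1
          dsimp at hs; subst hs
          exact Or.inr ⟨y, x, hG.symm, hyS, fun hxS => h2 ((hmemB _).2 ⟨rfl, hxS⟩),
            Sym2.eq_swap⟩
      · dsimp at hxy hst
        subst hxy
        rcases hmem with ⟨h1, h2⟩ | ⟨h1, h2⟩
        · obtain ⟨hs, hxS⟩ := (hmemB _).1 h1
          dsimp at hs; subst hs
          cases t with
          | false => exact absurd rfl hst
          | true => exact Or.inl ⟨x, hxS, rfl⟩
        · obtain ⟨ht, hxS⟩ := (hmemB _).1 h1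
          dsimp at ht; subst ht
          cases s with
          | false => exact absurd rfl hst
          | true => exact Or.inl ⟨x, hxS, Sym2.eq_swap⟩
  -- the flip pair
  obtain ⟨x, y, hxy, hxA, hyA⟩ :=
    exists_flip (fun z : V => (z, false) ∈ A) w hu hv
  obtain ⟨hG, hxS, hyS⟩ := hxy
  have he0A : s((x, false), (y, false)) ∈ bdry (bunkbed G) A :=
    (mem_bdry_iff _ _ _ _).2 ⟨hadjH x y false hG, Or.inl ⟨hxA, hyA⟩⟩
  -- the companion map on edges
  set f : Sym2 (V × Bool) → Sym2 (V × Bool) :=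
    fun e => if e ∈ bdry (bunkbed G) A then e else Sym2.map (fun p => (p.1, true)) e
    with hfdef
  have hfv : ∀ z : V, z ∈ S → f s((z, false), (z, true)) = s((z, false), (z, true)) :=
    fun z hz => if_pos (hvertA z hz)
  have hfh : ∀ a b : V, f s((a, false), (b, false)) = s((a, false), (b, false)) ∨
      f s((a, false), (b, false)) = s((a, true), (b, true)) := by
    intro a b
    by_cases hA : s(((a : V), false), (b, false)) ∈ bdry (bunkbed G) A
    · exact Or.inl (if_pos hA)
    · right
      rw [hfdef]
      simp only [if_neg hA, Sym2.map_pair_eq]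
  -- for a horizontal boundary edge of B whose bottom copy misses ∂A, the top copy is in ∂A
  have hhor : ∀ a b : V, G.Adj a b → a ∈ S → b ∉ S →
      s((a, false), (b, false)) ∉ bdry (bunkbed G) A →
      s((a, true), (b, true)) ∈ bdry (bunkbed G) A := by
    intro a b hG' haS hbS hne
    rw [mem_bdry_iff] at hne ⊢
    refine ⟨hadjH a b true hG', ?_⟩
    have haX : Xor' ((a, false) ∈ A) ((a, true) ∈ A) := (hmemS a).1 haS
    have hbX : ¬ Xor' ((b, false) ∈ A) ((b, true) ∈ A) := fun h => hbS ((hmemS b).2 h)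
    have hne' : ¬ (((a, false) ∈ A ∧ (b, false) ∉ A) ∨ ((b, false) ∈ A ∧ (a, false) ∉ A)) :=
      fun h => hne ⟨hadjH a b false hG', h⟩
    rcases haX with ⟨h1, h2⟩ | ⟨h1, h2⟩
    · have hb1 : (b, false) ∈ A := by
        by_contra hb; exact hne' (Or.inl ⟨h1, hb⟩)
      have hb2 : (b, true) ∈ A := by
        by_contra hb; exact hbX (Or.inl ⟨hb1, hb⟩)
      exact Or.inr ⟨hb2, h2⟩
    · have hb1 : (b, false) ∉ A := fun hb => hne' (Or.inr ⟨hb, h2⟩)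
      have hb2 : (b, true) ∉ A := fun hb => hbX (Or.inr ⟨hb, hb1⟩)
      exact Or.inl ⟨h1, hb2⟩
  -- f maps ∂B into ∂A preserving q
  have hmap : ∀ e ∈ bdry (bunkbed G) B, f e ∈ bdry (bunkbed G) A ∧ q (f e) = q e := by
    intro e he
    by_cases hA : e ∈ bdry (bunkbed G) A
    · have hfe : f e = e := by rw [hfdef]; simp only [if_pos hA]
      rw [hfe]; exact ⟨hA, rfl⟩
    · rcases hBchar e he with ⟨z, hz, rfl⟩ | ⟨a, b, hG', haS, hbS, rfl⟩
      · exact absurd (hvertA z hz) hA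
      · have hfe : f s(((a : V), false), (b, false)) = s((a, true), (b, true)) := by
          rw [hfdef]; simp only [if_neg hA, Sym2.map_pair_eq]
        rw [hfe]
        exact ⟨hhor a b hG' haS hbS hA, (hsym a b).symm⟩
  -- injectivity of f on ∂B
  have hfinj : ∀ e₁ ∈ (bdry (bunkbed G) B).toFinset, ∀ e₂ ∈ (bdry (bunkbed G) B).toFinset,
      f e₁ = f e₂ → e₁ = e₂ := by
    intro e₁ h₁ e₂ h₂ hf
    rw [Set.mem_toFinset] at h₁ h₂
    rcases hBchar e₁ h₁ with ⟨z₁, hz₁, rfl⟩ | ⟨a₁, b₁, hG₁, ha₁, hb₁, rfl⟩ <;>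
      rcases hBchar e₂ h₂ with ⟨z₂, hz₂, rfl⟩ | ⟨a₂, b₂, hG₂, ha₂, hb₂, rfl⟩
    · rw [hfv z₁ hz₁, hfv z₂ hz₂] at hf
      exact hf
    · rw [hfv z₁ hz₁] at hf
      rcases hfh a₂ b₂ with h | h <;> rw [h] at hf <;>
        simp [Sym2.eq_iff, Prod.ext_iff] at hf
    · rw [hfv z₂ hz₂] at hf
      rcases hfh a₁ b₁ with h | h <;> rw [h] at hf <;>
        simp [Sym2.eq_iff, Prod.ext_iff] at hf
    · rcases hfh a₁ b₁ with h1 | h1 <;> rcases hfh a₂ b₂ with h2 | h2 <;>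
        rw [h1, h2] at hf
      · exact hf
      · simp [Sym2.eq_iff, Prod.ext_iff] at hf
      · simp [Sym2.eq_iff, Prod.ext_iff] at hf
      · rw [Sym2.eq_iff] at hf
        simp only [Prod.mk.injEq, and_true] at hf
        rcases hf with ⟨⟨rfl, _⟩, ⟨rfl, _⟩⟩ | ⟨⟨rfl, _⟩, ⟨rfl, _⟩⟩
        · rfl
        · exact Sym2.eq_swap
  -- divisibility
  have hdvd : (∏ e ∈ (bdry (bunkbed G) B).toFinset, (MvPolynomial.X (q e) : MvPolynomial ι ℝ)) ∣
      (∏ e ∈ (bdry (bunkbed G) A).toFinset, (MvPolynomial.X (q e) : MvPolynomial ι ℝ)) := by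
    have him : (bdry (bunkbed G) B).toFinset.image f ⊆ (bdry (bunkbed G) A).toFinset := by
      intro e he
      rw [Finset.mem_image] at he
      obtain ⟨e', he', rfl⟩ := he
      exact Set.mem_toFinset.2 (hmap e' (Set.mem_toFinset.1 he')).1
    calc (∏ e ∈ (bdry (bunkbed G) B).toFinset, (MvPolynomial.X (q e) : MvPolynomial ι ℝ))
        = ∏ e ∈ (bdry (bunkbed G) B).toFinset, (MvPolynomial.X (q (f e)) : MvPolynomial ι ℝ) :=
          Finset.prod_congr rfl (fun e he => by
            rw [(hmap e (Set.mem_toFinset.1 he)).2])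
      _ = ∏ e ∈ (bdry (bunkbed G) B).toFinset.image f,
            (MvPolynomial.X (q e) : MvPolynomial ι ℝ) := by
          rw [Finset.prod_image hfinj]
      _ ∣ ∏ e ∈ (bdry (bunkbed G) A).toFinset, (MvPolynomial.X (q e) : MvPolynomial ι ℝ) :=
          Finset.prod_dvd_prod_of_subset _ _ _ him
  -- strictness: no edge of ∂B carries the variable of the flip edge
  have hc : ∀ e ∈ bdry (bunkbed G) B, q e ≠ q s((x, false), (y, false)) := by
    intro e he hqe
    have heE : e ∈ (bunkbed G).edgeSet := he.1
    have he0E : s((x, false), (y, false)) ∈ (bunkbed G).edgeSet := he0A.1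
    rcases hinj e heE _ he0E hqe with heq | ⟨x', y', ⟨h1, h2⟩ | ⟨h1, h2⟩⟩
    · rcases hBchar e he with ⟨z, hz, rfl⟩ | ⟨a, b, hG', haS, hbS, rfl⟩
      · simp [Sym2.eq_iff, Prod.ext_iff] at heq
      · rw [Sym2.eq_iff] at heq
        simp only [Prod.mk.injEq, and_true] at heq
        rcases heq with ⟨⟨rfl, _⟩, ⟨rfl, _⟩⟩ | ⟨⟨rfl, _⟩, ⟨rfl, _⟩⟩
        · exact hbS hyS
        · exact hbS hxS
    · simp [Sym2.eq_iff, Prod.ext_iff] at h2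
    · rcases hBchar e he with ⟨z, hz, rfl⟩ | ⟨a, b, hG', haS, hbS, rfl⟩ <;>
        simp [Sym2.eq_iff, Prod.ext_iff] at h1
  have hne : (∏ e ∈ (bdry (bunkbed G) B).toFinset, (MvPolynomial.X (q e) : MvPolynomial ι ℝ)) ≠
      (∏ e ∈ (bdry (bunkbed G) A).toFinset, (MvPolynomial.X (q e) : MvPolynomial ι ℝ)) := by
    intro hPP
    have hev := congrArg
      (MvPolynomial.eval (fun i : ι => if i = q s((x, false), (y, false)) then (0 : ℝ) else 1))
      hPP
    rw [map_prod, map_prod] at hev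
    simp only [MvPolynomial.eval_X] at hev
    have hL : (∏ e ∈ (bdry (bunkbed G) B).toFinset,
        (if q e = q s((x, false), (y, false)) then (0 : ℝ) else 1)) = 1 :=
      Finset.prod_eq_one (fun e he => if_neg (hc e (Set.mem_toFinset.1 he)))
    have hR : (∏ e ∈ (bdry (bunkbed G) A).toFinset,
        (if q e = q s((x, false), (y, false)) then (0 : ℝ) else 1)) = 0 :=
      Finset.prod_eq_zero (Set.mem_toFinset.2 he0A) (if_pos rfl)
    rw [hL, hR] at hev
    exact one_ne_zero hev
  -- supp B = S
  have hsuppB : supp B = S := by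
    ext z
    have h1 : ((z, false) ∈ B) = (z ∈ S) := by
      simp [hBdef]
    have h2 : ((z, true) ∈ B) = False := by
      simp [hBdef]
    simp [supp, h1, h2, Xor', Xor]
  refine ⟨⟨⟨rfl, huS⟩, fun h => by simpa using ((hmemB _).1 h).1⟩, ?_, hdvd, hne⟩
  rw [hsuppB]
  exact ⟨w⟩
end
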